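/- For every natural number m ≥ 2, the number of ordinary ménage permutations in S_m (permutations π of {1,...,m} with π(i) ≠ i and π(i) ≢ i+1 (mod m) for all i) equals ∑_{k=0}^{m} (-1)^k · (2m/(2m-k)) · C(2m-k, k) · (m-k)!. -/

import Mathlib

open Finset

/-- An ordinary ménage permutation of `{1,...,m}` (modeled on `Fin m`):
`π i ≠ i` and `π i ≢ i + 1 (mod m)` for all `i`. -/
def IsOrdinaryMenage {m : ℕ} (π : Equiv.Perm (Fin m)) : Prop :=
  ∀ i : Fin m, π i ≠ i ∧ (π i : ℕ) ≠ ((i : ℕ) + 1) % m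

instance {m : ℕ} (π : Equiv.Perm (Fin m)) : Decidable (IsOrdinaryMenage π) := by
  unfold IsOrdinaryMenage; infer_instance

namespace MenageAux

/-- Number of k-subsets of the n-cycle (vertices `range n`) with no two cyclically adjacent. -/
def Acirc (n k : ℕ) : ℕ :=
  ((range n).powerset.filter fun s =>
    s.card = k ∧ (∀ x ∈ s, x + 1 ∉ s) ∧ ¬(0 ∈ s ∧ n - 1 ∈ s)).card

def Bad (m : ℕ) (p : Fin m × Fin m) : Prop :=
  p.2 = p.1 ∨ (p.2 : ℕ) = ((p.1 : ℕ) + 1) % m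

instance (m : ℕ) (p : Fin m × Fin m) : Decidable (Bad m p) := by
  unfold Bad; infer_instance

def IsPP {m : ℕ} (S : Finset (Fin m × Fin m)) : Prop :=
  ∀ p ∈ S, ∀ q ∈ S, p ≠ q → p.1 ≠ q.1 ∧ p.2 ≠ q.2

instance {m : ℕ} (S : Finset (Fin m × Fin m)) : Decidable (IsPP S) := by
  unfold IsPP; infer_instance

def pps (m : ℕ) : Finset (Finset (Fin m × Fin m)) :=
  univ.filter fun S => (∀ p ∈ S, Bad m p) ∧ IsPP S

def ppCount (m k : ℕ) : ℕ := ((pps m).filter fun S => S.card = k).card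

lemma pp_card_le {m : ℕ} {S : Finset (Fin m × Fin m)} (hpp : IsPP S) : S.card ≤ m := by
  have hinj : Set.InjOn Prod.fst (S : Set (Fin m × Fin m)) := by
    intro p hp q hq h
    by_contra hne
    exact (hpp p hp q hq hne).1 h
  calc S.card = (S.image Prod.fst).card := (Finset.card_image_of_injOn hinj).symm
    _ ≤ (univ : Finset (Fin m)).card := card_le_card (subset_univ _)
    _ = m := by simp

lemma card_extensions {m : ℕ} (S : Finset (Fin m × Fin m)) (hpp : IsPP S) :
    (univ.filter fun π : Equiv.Perm (Fin m) => ∀ p ∈ S, π p.1 = p.2).card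
      = (m - S.card).factorial := by
  classical
  set T := S.image Prod.fst with hT
  set U := S.image Prod.snd with hU
  have hTcard : T.card = S.card := by
    apply Finset.card_image_of_injOn
    intro p hp q hq h
    by_contra hne
    exact (hpp p hp q hq hne).1 h
  have hUcard : U.card = S.card := by
    apply Finset.card_image_of_injOn
    intro p hp q hq h
    by_contra hne
    exact (hpp p hp q hq hne).2 h
  have huT : ∀ x ∈ T, ∃! p, p ∈ S ∧ p.1 = x := by
    intro x hx
    rw [hT, mem_image] at hx
    obtain ⟨p, hp, hpx⟩ := hx
    refine ⟨p, ⟨hp, hpx⟩, ?_⟩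
    rintro q ⟨hq, hqx⟩
    by_contra hne
    exact (hpp q hq p hp hne).1 (hqx.trans hpx.symm)
  have hmemT : ∀ p ∈ S, p.1 ∈ T := fun p hp => by
    rw [hT, mem_image]; exact ⟨p, hp, rfl⟩
  have hmemU : ∀ p ∈ S, p.2 ∈ U := fun p hp => by
    rw [hU, mem_image]; exact ⟨p, hp, rfl⟩
  -- key: π maps T-membership to U-membership
  have key : ∀ (π : Equiv.Perm (Fin m)), (∀ p ∈ S, π p.1 = p.2) →
      ∀ x : Fin m, x ∈ T ↔ π x ∈ U := by
    intro π hπ x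
    constructor
    · intro hx
      obtain ⟨p, ⟨hp, hpx⟩, -⟩ := huT x hx
      rw [← hpx, hπ p hp]
      exact hmemU p hp
    · intro hx
      rw [hU, mem_image] at hx
      obtain ⟨q, hq, hqy⟩ := hx
      have := hπ q hq
      rw [hqy] at this
      rw [← π.injective this]
      exact hmemT q hq
  -- the chosen value function
  have hg : ∀ (x : Fin m) (h : x ∈ T),
      (S.choose (fun p => p.1 = x) (huT x h)) ∈ S ∧
        (S.choose (fun p => p.1 = x) (huT x h)).1 = x :=
    fun x h => ⟨Finset.choose_mem (fun p => p.1 = x) S (huT x h), Finset.choose_property (fun p => p.1 = x) S (huT x h)⟩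
  -- construct the backward function
  have mkf : ∀ (e : {x : Fin m // x ∉ T} ≃ {y : Fin m // y ∉ U}),
      ∃ π : Equiv.Perm (Fin m), (∀ p ∈ S, π p.1 = p.2) ∧
        (∀ x (h : x ∈ T), π x = (S.choose (fun p => p.1 = x) (huT x h)).2) ∧
        (∀ x (h : x ∉ T), π x = (e ⟨x, h⟩ : Fin m)) := by
    intro e
    set f : Fin m → Fin m := fun x =>
      if h : x ∈ T then (S.choose (fun p => p.1 = x) (huT x h)).2 else (e ⟨x, h⟩ : Fin m)
      with hf
    have hfT : ∀ x (h : x ∈ T), f x = (S.choose (fun p => p.1 = x) (huT x h)).2 := by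
      intro x h; rw [hf]; simp only [dif_pos h]
    have hfnT : ∀ x (h : x ∉ T), f x = (e ⟨x, h⟩ : Fin m) := by
      intro x h; rw [hf]; simp only [dif_neg h]
    have hfU : ∀ x (h : x ∈ T), f x ∈ U := by
      intro x h
      rw [hfT x h]
      exact hmemU _ (hg x h).1
    have hinj : Function.Injective f := by
      intro x1 x2 heq
      by_cases h1 : x1 ∈ T <;> by_cases h2 : x2 ∈ T
      · rw [hfT x1 h1, hfT x2 h2] at heq
        set p1 := S.choose (fun p => p.1 = x1) (huT x1 h1) with hp1
        set p2 := S.choose (fun p => p.1 = x2) (huT x2 h2) with hp2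
        by_contra hne
        have hpne : p1 ≠ p2 := by
          intro hcon
          apply hne
          rw [← (hg x1 h1).2, ← (hg x2 h2).2, ← hp1, ← hp2, hcon]
        exact (hpp p1 (hg x1 h1).1 p2 (hg x2 h2).1 hpne).2 heq
      · exfalso
        have := hfU x1 h1
        rw [heq, hfnT x2 h2] at this
        exact (e ⟨x2, h2⟩).2 this
      · exfalso
        have := hfU x2 h2
        rw [← heq, hfnT x1 h1] at this
        exact (e ⟨x1, h1⟩).2 this
      · rw [hfnT x1 h1, hfnT x2 h2] at heq
        have : e ⟨x1, h1⟩ = e ⟨x2, h2⟩ := Subtype.ext heq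
        have := e.injective this
        exact congrArg Subtype.val this
    have hbij : Function.Bijective f := Finite.injective_iff_bijective.mp hinj
    refine ⟨Equiv.ofBijective f hbij, ?_, ?_, ?_⟩
    · intro p hp
      have h1 : p.1 ∈ T := hmemT p hp
      show f p.1 = p.2
      rw [hfT p.1 h1]
      have := (huT p.1 h1).unique ⟨(hg p.1 h1).1, (hg p.1 h1).2⟩ ⟨hp, rfl⟩
      rw [this]
    · intro x h; exact hfT x h
    · intro x h; exact hfnT x h
  -- the equivalence
  have E : {π : Equiv.Perm (Fin m) // ∀ p ∈ S, π p.1 = p.2} ≃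
      ({x : Fin m // x ∉ T} ≃ {y : Fin m // y ∉ U}) := by
    refine
      { toFun := fun πs => Equiv.subtypeEquiv πs.1 fun x => not_congr (key πs.1 πs.2 x)
        invFun := fun e => ⟨(mkf e).choose, (mkf e).choose_spec.1⟩
        left_inv := ?_
        right_inv := ?_ }
    · rintro ⟨π, hπ⟩
      apply Subtype.ext
      apply Equiv.ext
      intro x
      obtain ⟨hs1, hs2, hs3⟩ := (mkf (Equiv.subtypeEquiv π fun x => not_congr (key π hπ x))).choose_spec
      by_cases h : x ∈ T
      · rw [hs2 x h]
        obtain ⟨hmem, hprop⟩ := hg x h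
        have := hπ _ hmem
        rw [hprop] at this
        exact (this).symm
      · rw [hs3 x h]
        rfl
    · intro e
      apply Equiv.ext
      rintro ⟨x, hx⟩
      apply Subtype.ext
      obtain ⟨hs1, hs2, hs3⟩ := (mkf e).choose_spec
      show ((mkf e).choose x : Fin m) = _
      rw [hs3 x hx]
  have hXcard : Fintype.card {x : Fin m // x ∉ T} = m - S.card := by
    rw [Fintype.card_subtype_compl, Fintype.card_fin]
    congr 1
    rw [← hTcard]
    exact Fintype.card_coe T
  have hYcard : Fintype.card {y : Fin m // y ∉ U} = m - S.card := by
    rw [Fintype.card_subtype_compl, Fintype.card_fin]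
    congr 1
    rw [← hUcard]
    exact Fintype.card_coe U
  have h1 : (univ.filter fun π : Equiv.Perm (Fin m) => ∀ p ∈ S, π p.1 = p.2).card
      = Fintype.card {π : Equiv.Perm (Fin m) // ∀ p ∈ S, π p.1 = p.2} :=
    (Fintype.card_subtype _).symm
  rw [h1, Fintype.card_congr E,
    Fintype.card_equiv (Fintype.equivOfCardEq (hXcard.trans hYcard.symm)), hXcard]

lemma IE (m : ℕ) :
    ((univ.filter fun π : Equiv.Perm (Fin m) => IsOrdinaryMenage π).card : ℚ)
      = ∑ S ∈ pps m, (-1 : ℚ) ^ S.card * ((m - S.card).factorial : ℚ) := by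
  classical
  rw [← Finset.sum_boole]
  have step : ∀ π : Equiv.Perm (Fin m), (if IsOrdinaryMenage π then (1 : ℚ) else 0)
      = ∑ S ∈ pps m, (-1 : ℚ) ^ S.card *
          (if ∀ p ∈ S, π p.1 = p.2 then (1 : ℚ) else 0) := by
    intro π
    have s1 : (if IsOrdinaryMenage π then (1 : ℚ) else 0)
        = ∏ i : Fin m, (-(if Bad m (i, π i) then (1 : ℚ) else 0) + 1) := by
      by_cases hπ : IsOrdinaryMenage π
      · rw [if_pos hπ]
        symm
        apply Finset.prod_eq_one
        intro i _
        rw [if_neg, neg_zero, zero_add]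
        rintro (hb | hb)
        · exact (hπ i).1 hb
        · exact (hπ i).2 hb
      · rw [if_neg hπ]
        symm
        rw [show IsOrdinaryMenage π ↔ ∀ i : Fin m, π i ≠ i ∧ (π i : ℕ) ≠ ((i : ℕ) + 1) % m
          from Iff.rfl] at hπ
        push_neg at hπ
        obtain ⟨i, hi⟩ := hπ
        apply Finset.prod_eq_zero (mem_univ i)
        have hbad : Bad m (i, π i) := by
          by_cases h : π i = i
          · exact Or.inl h
          · exact Or.inr (hi h)
        rw [if_pos hbad, neg_add_cancel]
    rw [s1, Finset.prod_add]
    simp only [Finset.prod_const_one, mul_one]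
    have hvan : ∀ t ∈ (univ : Finset (Fin m)).powerset,
        (∏ i ∈ t, -(if Bad m (i, π i) then (1 : ℚ) else 0)) ≠ 0 →
          (∀ i ∈ t, Bad m (i, π i)) := by
      intro t _ hne i hi
      by_contra hb
      apply hne
      apply Finset.prod_eq_zero hi
      rw [if_neg hb, neg_zero]
    rw [← Finset.sum_filter_of_ne hvan]
    have hbridge : (∑ S ∈ pps m, (-1 : ℚ) ^ S.card *
          (if ∀ p ∈ S, π p.1 = p.2 then (1 : ℚ) else 0))
        = ∑ S ∈ (pps m).filter (fun S => ∀ p ∈ S, π p.1 = p.2), (-1 : ℚ) ^ S.card := by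
      rw [Finset.sum_filter]
      apply Finset.sum_congr rfl
      intro S _
      by_cases h : ∀ p ∈ S, π p.1 = p.2
      · rw [if_pos h, if_pos h, mul_one]
      · rw [if_neg h, if_neg h, mul_zero]
    rw [hbridge]
    apply Finset.sum_nbij' (fun t => t.image fun i => (i, π i)) (fun S => S.image Prod.fst)
    · intro t ht
      simp only [mem_filter, mem_powerset] at ht
      obtain ⟨-, hbad⟩ := ht
      simp only [pps, mem_filter, mem_univ, true_and]
      refine ⟨⟨fun p hp => ?_, fun p hp q hq hne => ?_⟩, fun p hp => ?_⟩
      · simp only [mem_image] at hp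
        obtain ⟨i, hi, rfl⟩ := hp
        exact hbad i hi
      · simp only [mem_image] at hp hq
        obtain ⟨i, hi, rfl⟩ := hp
        obtain ⟨j, hj, rfl⟩ := hq
        have hij : i ≠ j := by rintro rfl; exact hne rfl
        exact ⟨hij, fun hcon => hij (π.injective hcon)⟩
      · simp only [mem_image] at hp
        obtain ⟨i, hi, rfl⟩ := hp
        rfl
    · intro S hS
      simp only [pps, mem_filter, mem_univ, true_and] at hS
      obtain ⟨⟨hbad, -⟩, hext⟩ := hS
      simp only [mem_filter, mem_powerset]
      refine ⟨subset_univ _, fun x hx => ?_⟩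
      simp only [mem_image] at hx
      obtain ⟨p, hp, rfl⟩ := hx
      have := hext p hp
      have hpeq : (p.1, π p.1) = p := by rw [this]
      rw [hpeq]
      exact hbad p hp
    · intro t ht
      rw [Finset.image_image]
      have : ∀ i ∈ t, ((Prod.fst ∘ fun i => (i, π i)) i) = id i := fun i _ => rfl
      rw [Finset.image_congr this, Finset.image_id]
    · intro S hS
      simp only [pps, mem_filter, mem_univ, true_and] at hS
      obtain ⟨-, hext⟩ := hS
      rw [Finset.image_image]
      have : ∀ p ∈ S, (((fun i => (i, π i)) ∘ Prod.fst) p) = id p := by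
        intro p hp
        simp only [Function.comp_apply, id_eq]
        rw [hext p hp]
      rw [Finset.image_congr this, Finset.image_id]
    · intro t ht
      simp only [mem_filter, mem_powerset] at ht
      obtain ⟨-, hbad⟩ := ht
      have h1 : (∏ i ∈ t, -(if Bad m (i, π i) then (1 : ℚ) else 0))
          = ∏ i ∈ t, (-1 : ℚ) := by
        apply Finset.prod_congr rfl
        intro i hi
        rw [if_pos (hbad i hi)]
      rw [h1, Finset.prod_const]
      congr 1
      rw [Finset.card_image_of_injOn]
      intro i _ j _ h
      exact congrArg Prod.fst h
  rw [Finset.sum_congr rfl fun π _ => step π, Finset.sum_comm]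
  refine Finset.sum_congr rfl fun S hS => ?_
  rw [← Finset.mul_sum]
  have hpp : IsPP S := by
    simp only [pps, mem_filter, mem_univ, true_and] at hS
    exact hS.2
  have hb : (∑ π : Equiv.Perm (Fin m), (if ∀ p ∈ S, π p.1 = p.2 then (1 : ℚ) else 0))
      = (((univ.filter fun π : Equiv.Perm (Fin m) => ∀ p ∈ S, π p.1 = p.2).card : ℕ) : ℚ) := by
    rw [Finset.sum_boole]
  rw [hb, card_extensions S hpp]

lemma IE' (m : ℕ) :
    ((univ.filter fun π : Equiv.Perm (Fin m) => IsOrdinaryMenage π).card : ℚ)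
      = ∑ k ∈ range (m + 1),
          (-1 : ℚ) ^ k * (ppCount m k : ℚ) * ((m - k).factorial : ℚ) := by
  classical
  rw [IE m]
  rw [← Finset.sum_fiberwise_of_maps_to (g := fun S : Finset (Fin m × Fin m) => S.card)
    (t := range (m + 1)) (fun S hS => by
      simp only [pps, mem_filter, mem_univ, true_and] at hS
      rw [mem_range]
      exact Nat.lt_succ_of_le (pp_card_le hS.2))]
  refine Finset.sum_congr rfl fun k hk => ?_
  rw [Finset.sum_congr rfl (fun S hS => by
    rw [(Finset.mem_filter.mp hS).2] :
      ∀ S ∈ (pps m).filter fun S => S.card = k, _ = (-1 : ℚ) ^ k * ((m - k).factorial : ℚ))]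
  rw [Finset.sum_const, nsmul_eq_mul]
  unfold ppCount
  ring

section Enc
variable (m : ℕ)

/-- encode a bad cell as a vertex of the 2m-cycle -/
def enc (p : Fin m × Fin m) : ℕ :=
  2 * (p.1 : ℕ) + if (p.2 : ℕ) = (p.1 : ℕ) then 0 else 1

variable {m}

lemma mod_succ_ite {i : ℕ} (h : i < m) : (i + 1) % m = if i + 1 = m then 0 else i + 1 := by
  split_ifs with h1
  · rw [h1, Nat.mod_self]
  · exact Nat.mod_eq_of_lt (by omega)

/-- decode, assuming `2 ≤ m` is around (we use `% m` for well-definedness) -/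
def dec (hm : 0 < m) (x : ℕ) : Fin m × Fin m :=
  (⟨x / 2 % m, Nat.mod_lt _ hm⟩,
    if x % 2 = 0 then ⟨x / 2 % m, Nat.mod_lt _ hm⟩ else ⟨(x / 2 + 1) % m, Nat.mod_lt _ hm⟩)

lemma enc_lt {p : Fin m × Fin m} (hp : Bad m p) : enc m p < 2 * m := by
  unfold enc
  have h1 : (p.1 : ℕ) < m := p.1.isLt
  split_ifs <;> omega

lemma dec_bad (hm : 2 ≤ m) {x : ℕ} (hx : x < 2 * m) : Bad m (dec (by omega) x) := by
  unfold Bad dec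
  by_cases h : x % 2 = 0
  · left; rw [if_pos h]
  · right; rw [if_neg h]
    simp

lemma dec_enc (hm : 2 ≤ m) {p : Fin m × Fin m} (hp : Bad m p) : dec (by omega) (enc m p) = p := by
  unfold Bad at hp
  have hi : (p.1 : ℕ) < m := p.1.isLt
  have hj : (p.2 : ℕ) < m := p.2.isLt
  unfold enc dec
  by_cases hd : (p.2 : ℕ) = (p.1 : ℕ)
  · rw [if_pos hd]
    have h2 : (2 * (p.1:ℕ) + 0) % 2 = 0 := by omega
    have h3 : (2 * (p.1:ℕ) + 0) / 2 = (p.1:ℕ) := by omega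
    rw [if_pos h2]
    refine Prod.ext (Fin.ext ?_) (Fin.ext ?_)
    · simp only; rw [h3, Nat.mod_eq_of_lt hi]
    · simp only; rw [h3, Nat.mod_eq_of_lt hi]; exact hd.symm
  · rw [if_neg hd]
    rcases hp with hp | hp
    · exact absurd (congrArg Fin.val hp) hd
    · have h2 : ¬((2 * (p.1:ℕ) + 1) % 2 = 0) := by omega
      have h3 : (2 * (p.1:ℕ) + 1) / 2 = (p.1:ℕ) := by omega
      rw [if_neg h2]
      refine Prod.ext (Fin.ext ?_) (Fin.ext ?_)
      · simp only; rw [h3, Nat.mod_eq_of_lt hi]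
      · simp only; rw [h3]; exact hp.symm

lemma enc_dec (hm : 2 ≤ m) {x : ℕ} (hx : x < 2 * m) : enc m (dec (by omega) x) = x := by
  unfold enc dec
  have h2 : x / 2 < m := by omega
  simp only
  rw [apply_ite (Fin.val : Fin m → ℕ)]
  simp only
  rw [Nat.mod_eq_of_lt h2]
  by_cases h : x % 2 = 0
  · rw [if_pos h, if_pos rfl]
    omega
  · rw [if_neg h, mod_succ_ite h2]
    have hne : ¬ ((if x / 2 + 1 = m then 0 else x / 2 + 1) = x / 2) := by
      split_ifs with h1 <;> omega
    rw [if_neg hne]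
    omega

lemma enc_inj (hm : 2 ≤ m) {p q : Fin m × Fin m} (hp : Bad m p) (hq : Bad m q)
    (h : enc m p = enc m q) : p = q := by
  have := dec_enc hm hp
  rw [h, dec_enc hm hq] at this
  exact this.symm

/-- conflict iff cyclically adjacent -/
lemma conflict_iff (hm : 2 ≤ m) {p q : Fin m × Fin m} (hp : Bad m p) (hq : Bad m q)
    (hne : p ≠ q) :
    ((p.1 = q.1) ∨ (p.2 = q.2)) ↔
      (enc m q = enc m p + 1 ∨ enc m p = enc m q + 1 ∨
        (enc m p = 0 ∧ enc m q = 2 * m - 1) ∨ (enc m q = 0 ∧ enc m p = 2 * m - 1)) := by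
  have hi : (p.1 : ℕ) < m := p.1.isLt
  have hj : (p.2 : ℕ) < m := p.2.isLt
  have hi' : (q.1 : ℕ) < m := q.1.isLt
  have hj' : (q.2 : ℕ) < m := q.2.isLt
  have hne' : ¬((p.1 : ℕ) = (q.1 : ℕ) ∧ (p.2 : ℕ) = (q.2 : ℕ)) := by
    rintro ⟨h1, h2⟩
    exact hne (Prod.ext (Fin.ext h1) (Fin.ext h2))
  unfold Bad at hp hq
  replace hp : (p.2:ℕ) = (p.1:ℕ) ∨ (p.2:ℕ) = ((p.1:ℕ) + 1) % m := by
    rcases hp with h | h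
    · exact Or.inl (congrArg Fin.val h)
    · exact Or.inr h
  replace hq : (q.2:ℕ) = (q.1:ℕ) ∨ (q.2:ℕ) = ((q.1:ℕ) + 1) % m := by
    rcases hq with h | h
    · exact Or.inl (congrArg Fin.val h)
    · exact Or.inr h
  rw [mod_succ_ite hi] at hp
  rw [mod_succ_ite hi'] at hq
  simp only [Fin.ext_iff]
  unfold enc
  split_ifs at hp hq ⊢ <;> rcases hp with hp | hp <;> rcases hq with hq | hq <;>
  · try simp only [false_and, and_false, or_false, false_or]
    omega

end Enc

lemma ppCount_eq_Acirc (m : ℕ) (hm : 2 ≤ m) (k : ℕ) :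
    ppCount m k = Acirc (2 * m) k := by
  have hm0 : 0 < m := by omega
  unfold ppCount Acirc
  apply Finset.card_nbij' (fun S => S.image (enc m)) (fun s => s.image (dec hm0))
  · -- forward membership
    intro S hS
    simp only [pps, mem_coe, mem_filter, mem_univ, true_and] at hS
    obtain ⟨⟨hbad, hpp⟩, hcard⟩ := hS
    have hinj : Set.InjOn (enc m) (S : Set (Fin m × Fin m)) := fun p hp q hq h => enc_inj hm (hbad p hp) (hbad q hq) h
    simp only [mem_coe, mem_filter, mem_powerset]
    refine ⟨fun x hx => ?_, ?_, fun x hx hx1 => ?_, fun hcirc => ?_⟩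
    · simp only [mem_image] at hx
      obtain ⟨p, hp, rfl⟩ := hx
      rw [mem_range]
      exact enc_lt (hbad p hp)
    · rw [Finset.card_image_of_injOn hinj, hcard]
    · simp only [mem_image] at hx hx1
      obtain ⟨p, hp, rfl⟩ := hx
      obtain ⟨q, hq, hq1⟩ := hx1
      have hne : p ≠ q := by rintro rfl; omega
      have hconf := (conflict_iff hm (hbad p hp) (hbad q hq) hne).mpr (Or.inl hq1)
      rcases hconf with h | h
      · exact (hpp p hp q hq hne).1 h
      · exact (hpp p hp q hq hne).2 h
    · obtain ⟨h0, h1⟩ := hcirc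
      simp only [mem_image] at h0 h1
      obtain ⟨p, hp, hp0⟩ := h0
      obtain ⟨q, hq, hq1⟩ := h1
      have hne : p ≠ q := by
        rintro rfl
        omega
      have hconf := (conflict_iff hm (hbad p hp) (hbad q hq) hne).mpr
        (Or.inr (Or.inr (Or.inl ⟨hp0, hq1⟩)))
      rcases hconf with h | h
      · exact (hpp p hp q hq hne).1 h
      · exact (hpp p hp q hq hne).2 h
  · -- backward membership
    intro s hs
    simp only [mem_coe, mem_filter, mem_powerset] at hs
    obtain ⟨hsub, hcard, hadj, hcirc⟩ := hs
    have hlt : ∀ x ∈ s, x < 2 * m := fun x hx => by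
      have := hsub hx; rwa [mem_range] at this
    have hinj : Set.InjOn (dec hm0) ↑s := by
      intro a ha b hb h
      have : enc m (dec hm0 a) = enc m (dec hm0 b) := congrArg _ h
      rwa [enc_dec hm (hlt a ha), enc_dec hm (hlt b hb)] at this
    simp only [pps, mem_coe, mem_filter, mem_univ, true_and]
    refine ⟨⟨fun p hp => ?_, ?_⟩, ?_⟩
    · simp only [mem_image] at hp
      obtain ⟨x, hx, rfl⟩ := hp
      exact dec_bad hm (hlt x hx)
    · -- IsPP
      intro p hp q hq hne
      simp only [mem_image] at hp hq
      obtain ⟨x, hx, rfl⟩ := hp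
      obtain ⟨y, hy, rfl⟩ := hq
      by_contra hcon
      rw [not_and_or, not_not, not_not] at hcon
      have hconf := (conflict_iff hm (dec_bad hm (hlt x hx)) (dec_bad hm (hlt y hy)) hne).mp hcon
      rw [enc_dec hm (hlt x hx), enc_dec hm (hlt y hy)] at hconf
      rcases hconf with h | h | ⟨h1, h2⟩ | ⟨h1, h2⟩
      · exact hadj x hx (h ▸ hy)
      · exact hadj y hy (h ▸ hx)
      · exact hcirc ⟨h1 ▸ hx, h2 ▸ hy⟩
      · exact hcirc ⟨h1 ▸ hy, h2 ▸ hx⟩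
    · rw [Finset.card_image_of_injOn hinj, hcard]
  · -- left inverse
    intro S hS
    simp only [pps, mem_coe, mem_filter, mem_univ, true_and] at hS
    obtain ⟨⟨hbad, -⟩, -⟩ := hS
    beta_reduce
    rw [Finset.image_image]
    have : ∀ p ∈ S, (dec hm0 ∘ enc m) p = id p := by
      intro p hp
      simp only [Function.comp_apply, id_eq]
      exact dec_enc hm (hbad p hp)
    rw [Finset.image_congr this, Finset.image_id]
  · -- right inverse
    intro s hs
    simp only [mem_coe, mem_filter, mem_powerset] at hs
    beta_reduce
    rw [Finset.image_image]
    have : ∀ x ∈ s, (enc m ∘ dec hm0) x = id x := by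
      intro x hx
      simp only [Function.comp_apply, id_eq]
      have := hs.1 hx; rw [mem_range] at this
      exact enc_dec hm this
    rw [Finset.image_congr this, Finset.image_id]

def L (N k : ℕ) : ℕ :=
  ((range N).powerset.filter fun s => s.card = k ∧ ∀ x ∈ s, x + 1 ∉ s).card

lemma L_zero (N : ℕ) : L N 0 = 1 := by
  unfold L
  rw [show ((range N).powerset.filter fun s => s.card = 0 ∧ ∀ x ∈ s, x + 1 ∉ s) = {∅} by
    ext s
    simp only [mem_filter, mem_powerset, Finset.card_eq_zero, mem_singleton]
    constructor
    · rintro ⟨-, rfl, -⟩; rfl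
    · rintro rfl; simp]
  simp

lemma L_zero_left (k : ℕ) : L 0 (k + 1) = 0 := by
  unfold L
  rw [Finset.card_eq_zero, Finset.filter_eq_empty_iff]
  intro s hs
  simp only [range_zero, powerset_empty, mem_singleton] at hs
  subst hs
  simp

lemma L_one (k : ℕ) : L 1 (k + 1) = if k = 0 then 1 else 0 := by
  unfold L
  have h1 : (range 1).powerset = {∅, {0}} := by decide
  rw [h1]
  rcases Nat.eq_zero_or_pos k with rfl | hk
  · rw [show ({∅, {0}} : Finset (Finset ℕ)).filter _ = {{0}} by decide]
    simp
  · rw [if_neg (by omega)]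
    rw [Finset.card_eq_zero, Finset.filter_eq_empty_iff]
    intro s hs
    simp only [mem_insert, mem_singleton] at hs
    rcases hs with rfl | rfl <;> simp <;> omega

lemma L_rec (N k : ℕ) : L (N + 2) (k + 1) = L (N + 1) (k + 1) + L N k := by
  unfold L
  classical
  rw [← Finset.card_filter_add_card_filter_not (s := (range (N+2)).powerset.filter
      fun s => s.card = k + 1 ∧ ∀ x ∈ s, x + 1 ∉ s) (p := fun s => N + 1 ∈ s)]
  rw [Nat.add_comm]
  congr 1
  · -- N+1 ∉ s part equals L (N+1) (k+1)
    congr 1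
    ext s
    simp only [mem_filter, mem_powerset]
    constructor
    · rintro ⟨⟨hs, h2⟩, h3⟩
      refine ⟨fun x hx => ?_, h2⟩
      have hr := hs hx
      simp only [mem_range] at hr ⊢
      rcases Nat.lt_or_ge x (N+1) with h | h
      · exact h
      · exfalso
        have hx' : x = N + 1 := by omega
        exact h3 (hx' ▸ hx)
    · rintro ⟨hs, h2⟩
      refine ⟨⟨fun x hx => ?_, h2⟩, fun hmem => ?_⟩
      · have := hs hx; simp only [mem_range] at this ⊢; omega
      · have := hs hmem; simp only [mem_range] at this; omega
  · -- N+1 ∈ s part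
    apply Finset.card_nbij' (fun s => s.erase (N + 1)) (fun s => insert (N + 1) s)
    · intro s hs
      simp only [mem_coe, mem_filter, mem_powerset] at hs ⊢
      obtain ⟨⟨hsub, hcard, hadj⟩, hmem⟩ := hs
      refine ⟨fun x hx => ?_, ?_, fun x hx => ?_⟩
      · rw [mem_erase] at hx
        obtain ⟨hne, hx⟩ := hx
        have hr := hsub hx
        simp only [mem_range] at hr ⊢
        have hxN : x ≠ N := by
          rintro rfl
          exact hadj x hx hmem
        omega
      · rw [Finset.card_erase_of_mem hmem, hcard]; rfl
      · rw [mem_erase] at hx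
        intro hc
        rw [mem_erase] at hc
        exact hadj x hx.2 hc.2
    · intro s hs
      simp only [mem_coe, mem_filter, mem_powerset] at hs ⊢
      obtain ⟨hsub, hcard, hadj⟩ := hs
      have hnm : (N + 1 : ℕ) ∉ s := by
        intro h; have := hsub h; simp only [mem_range] at this; omega
      refine ⟨⟨fun x hx => ?_, ?_, fun x hx hc => ?_⟩, by simp⟩
      · rw [mem_insert] at hx
        simp only [mem_range]
        rcases hx with rfl | hx
        · omega
        · have := hsub hx; simp only [mem_range] at this; omega
      · rw [Finset.card_insert_of_notMem hnm, hcard]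
      · rw [mem_insert] at hx hc
        rcases hx with rfl | hx
        · rcases hc with hc | hc
          · omega
          · have := hsub hc; simp only [mem_range] at this; omega
        · rcases hc with hc | hc
          · have := hsub hx; simp only [mem_range] at this; omega
          · exact hadj x hx hc
    · intro s hs
      simp only [mem_coe, mem_filter] at hs
      exact Finset.insert_erase hs.2
    · intro s hs
      simp only [mem_coe, mem_filter, mem_powerset] at hs
      apply Finset.erase_insert
      intro h; have := hs.1 h; simp only [mem_range] at this; omega

lemma L_eq (N : ℕ) : ∀ k, L N k = Nat.choose (N + 1 - k) k := by
  induction N using Nat.strong_induction_on with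
  | _ N ih =>
    intro k
    match N, k with
    | 0, 0 => simpa using L_zero 0
    | 0, k + 1 =>
      rw [L_zero_left, show 0 + 1 - (k+1) = 0 by omega]
      exact (Nat.choose_eq_zero_of_lt (by omega)).symm
    | 1, 0 => simpa using L_zero 1
    | 1, k + 1 =>
      rw [L_one]
      rcases Nat.eq_zero_or_pos k with rfl | hk
      · simp
      · rw [if_neg (by omega), show 1 + 1 - (k+1) = 0 by omega,
          Nat.choose_eq_zero_of_lt (by omega)]
    | N + 2, 0 => simpa using L_zero (N+2)
    | N + 2, k + 1 =>
      rw [L_rec, ih (N+1) (by omega) (k+1), ih N (by omega) k]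
      rcases le_or_gt k (N + 1) with h | h
      · have h1 : N + 2 + 1 - (k + 1) = (N + 1 - k) + 1 := by omega
        have h2 : N + 1 + 1 - (k + 1) = N + 1 - k := by omega
        rw [h1, h2, Nat.choose_succ_succ']
        omega
      · have h2 : N + 1 + 1 - (k + 1) < k + 1 := by omega
        have h3 : N + 1 - k = 0 := by omega
        rw [h3, Nat.choose_eq_zero_of_lt h2, Nat.choose_eq_zero_of_lt (by omega),
          Nat.choose_eq_zero_of_lt (show N + 2 + 1 - (k+1) < k + 1 by omega)]

lemma card_shift (c N k : ℕ) :
    ((Ico c (N + c)).powerset.filter fun s => s.card = k ∧ ∀ x ∈ s, x + 1 ∉ s).card = L N k := by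
  unfold L
  apply Finset.card_nbij' (fun s => s.image (fun x => x - c)) (fun s => s.image (fun x => x + c))
  · intro s hs
    simp only [mem_coe, mem_filter, mem_powerset] at hs ⊢
    obtain ⟨hsub, hcard, hadj⟩ := hs
    have hge : ∀ x ∈ s, c ≤ x ∧ x < N + c := fun x hx => by
      have := hsub hx; rw [mem_Ico] at this; omega
    have hinj : Set.InjOn (fun x => x - c) ↑s := by
      intro a ha b hb hab
      have h1 := hge a ha; have h2 := hge b hb
      simp only at hab; omega
    refine ⟨fun y hy => ?_, ?_, fun y hy hc2 => ?_⟩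
    · simp only [mem_image] at hy
      obtain ⟨x, hx, rfl⟩ := hy
      have := hge x hx; simp only [mem_range]; omega
    · rw [Finset.card_image_of_injOn hinj, hcard]
    · simp only [mem_image] at hy hc2
      obtain ⟨a, ha, rfl⟩ := hy
      obtain ⟨b, hb, hab⟩ := hc2
      have h1 := hge a ha; have h2 := hge b hb
      have : b = a + 1 := by omega
      exact hadj a ha (this ▸ hb)
  · intro s hs
    simp only [mem_coe, mem_filter, mem_powerset] at hs ⊢
    obtain ⟨hsub, hcard, hadj⟩ := hs
    have hlt : ∀ x ∈ s, x < N := fun x hx => by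
      have := hsub hx; rwa [mem_range] at this
    refine ⟨fun y hy => ?_, ?_, fun y hy hc2 => ?_⟩
    · simp only [mem_image] at hy
      obtain ⟨x, hx, rfl⟩ := hy
      have := hlt x hx; rw [mem_Ico]; omega
    · rw [Finset.card_image_of_injective s (add_left_injective c), hcard]
    · simp only [mem_image] at hy hc2
      obtain ⟨a, ha, rfl⟩ := hy
      obtain ⟨b, hb, hab⟩ := hc2
      have : b = a + 1 := by omega
      exact hadj a ha (this ▸ hb)
  · intro s hs
    simp only [mem_coe, mem_filter, mem_powerset] at hs
    beta_reduce
    rw [Finset.image_image]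
    have : ∀ x ∈ s, ((fun x => x + c) ∘ fun x => x - c) x = id x := by
      intro x hx
      have := hs.1 hx; rw [mem_Ico] at this
      simp only [Function.comp_apply, id_eq]; omega
    rw [Finset.image_congr this, Finset.image_id]
  · intro s hs
    beta_reduce
    rw [Finset.image_image]
    have : ∀ x ∈ s, ((fun x => x - c) ∘ fun x => x + c) x = id x := by
      intro x _; simp only [Function.comp_apply, id_eq]; omega
    rw [Finset.image_congr this, Finset.image_id]

lemma Acirc_succ (n k : ℕ) (hn : 3 ≤ n) :
    Acirc n (k + 1) = L (n - 1) (k + 1) + L (n - 3) k := by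
  unfold Acirc
  classical
  rw [← Finset.card_filter_add_card_filter_not (s := (range n).powerset.filter
      fun s => s.card = k + 1 ∧ (∀ x ∈ s, x + 1 ∉ s) ∧ ¬(0 ∈ s ∧ n - 1 ∈ s))
      (p := fun s => 0 ∈ s), Nat.add_comm]
  congr 1
  · -- 0 ∉ s part: = L (n-1) (k+1)
    rw [← card_shift 1 (n-1) (k+1), show n - 1 + 1 = n by omega]
    congr 1
    ext s
    simp only [mem_filter, mem_powerset]
    constructor
    · rintro ⟨⟨hsub, hcard, hadj, -⟩, h0⟩
      refine ⟨fun x hx => ?_, hcard, hadj⟩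
      have := hsub hx; rw [mem_range] at this; rw [mem_Ico]
      have : x ≠ 0 := fun h => h0 (h ▸ hx)
      omega
    · rintro ⟨hsub, hcard, hadj⟩
      have h0 : (0 : ℕ) ∉ s := fun h => by have := hsub h; rw [mem_Ico] at this; omega
      refine ⟨⟨fun x hx => ?_, hcard, hadj, fun h => h0 h.1⟩, h0⟩
      have := hsub hx; rw [mem_Ico] at this; rw [mem_range]; omega
  · -- 0 ∈ s part: = L (n-3) k
    rw [← card_shift 2 (n-3) k, show n - 3 + 2 = n - 1 by omega]
    apply Finset.card_nbij' (fun s => s.erase 0) (fun s => insert 0 s)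
    · intro s hs
      simp only [mem_coe, mem_filter, mem_powerset] at hs ⊢
      obtain ⟨⟨hsub, hcard, hadj, hcirc⟩, h0⟩ := hs
      refine ⟨fun x hx => ?_, ?_, fun x hx hc => ?_⟩
      · rw [mem_erase] at hx
        obtain ⟨hne, hx⟩ := hx
        have hr := hsub hx; rw [mem_range] at hr
        rw [mem_Ico]
        have h1 : x ≠ 1 := by rintro rfl; exact hadj 0 h0 hx
        have h2 : x ≠ n - 1 := by rintro rfl; exact hcirc ⟨h0, hx⟩
        omega
      · rw [Finset.card_erase_of_mem h0, hcard]; rfl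
      · rw [mem_erase] at hx hc
        exact hadj x hx.2 hc.2
    · intro s hs
      simp only [mem_coe, mem_filter, mem_powerset] at hs ⊢
      obtain ⟨hsub, hcard, hadj⟩ := hs
      have hmem : ∀ x ∈ s, 2 ≤ x ∧ x < n - 1 := fun x hx => by
        have := hsub hx; rwa [mem_Ico] at this
      have h0 : (0 : ℕ) ∉ s := fun h => by have := hmem 0 h; omega
      refine ⟨⟨fun x hx => ?_, ?_, fun x hx hc => ?_, fun h => ?_⟩, by simp⟩
      · rw [mem_insert] at hx
        rw [mem_range]
        rcases hx with rfl | hx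
        · omega
        · have := hmem x hx; omega
      · rw [Finset.card_insert_of_notMem h0, hcard]
      · rw [mem_insert] at hx hc
        rcases hx with rfl | hx
        · rcases hc with hc | hc
          · omega
          · have := hmem 1 hc; omega
        · rcases hc with hc | hc
          · omega
          · exact hadj x hx hc
      · rcases h with ⟨-, h⟩
        rw [mem_insert] at h
        rcases h with h | h
        · omega
        · have := hmem _ h; omega
    · intro s hs
      simp only [mem_coe, mem_filter] at hs
      exact Finset.insert_erase hs.2
    · intro s hs
      simp only [mem_coe, mem_filter, mem_powerset] at hs
      apply Finset.erase_insert
      intro h; have := hs.1 h; rw [mem_Ico] at this; omega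

lemma Acirc_zero (n : ℕ) : Acirc n 0 = 1 := by
  unfold Acirc
  rw [show ((range n).powerset.filter fun s =>
      s.card = 0 ∧ (∀ x ∈ s, x + 1 ∉ s) ∧ ¬(0 ∈ s ∧ n - 1 ∈ s)) = {∅} by
    ext s
    simp only [mem_filter, mem_powerset, Finset.card_eq_zero, mem_singleton]
    constructor
    · rintro ⟨-, rfl, -⟩; rfl
    · rintro rfl; simp]
  simp

lemma Acirc_formula (m k : ℕ) (hm : 2 ≤ m) (hk : k ≤ m) :
    (Acirc (2 * m) k : ℚ)
      = ((2 * m : ℚ) / ((2 * m - k : ℕ) : ℚ)) * (Nat.choose (2 * m - k) k : ℚ) := by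
  set a := 2 * m - k with ha
  have ha1 : 1 ≤ a := by omega
  have haQ : ((a : ℕ) : ℚ) ≠ 0 := by
    have : 0 < a := by omega
    exact_mod_cast this.ne'
  rw [div_mul_eq_mul_div, eq_div_iff haQ]
  rcases k with _ | k'
  · rw [Acirc_zero]
    push_cast
    simp only [Nat.choose_zero_right]
    push_cast
    have : a = 2 * m := by omega
    rw [this]; push_cast; ring
  · rw [Acirc_succ (2*m) k' (by omega), L_eq, L_eq,
      show 2 * m - 1 + 1 - (k' + 1) = a by omega,
      show 2 * m - 3 + 1 - k' = a - 1 by omega]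
    have key : a * Nat.choose (a - 1) k' = Nat.choose a (k' + 1) * (k' + 1) := by
      have h := Nat.add_one_mul_choose_eq (a - 1) k'
      rwa [show a - 1 + 1 = a by omega] at h
    have keyQ : ((a : ℕ) : ℚ) * (Nat.choose (a - 1) k' : ℚ)
        = (Nat.choose a (k' + 1) : ℚ) * ((k' : ℚ) + 1) := by
      exact_mod_cast congrArg (fun x : ℕ => (x : ℚ)) key
    have ha2 : ((a : ℕ) : ℚ) + ((k' : ℚ) + 1) = 2 * (m : ℚ) := by
      have : a + (k' + 1) = 2 * m := by omega
      exact_mod_cast this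
    push_cast
    linear_combination keyQ + (Nat.choose a (k' + 1) : ℚ) * ha2

end MenageAux

theorem ordinary_menage_count (m : ℕ) (hm : 2 ≤ m) :
    ((Finset.univ.filter fun π : Equiv.Perm (Fin m) => IsOrdinaryMenage π).card : ℚ) =
      ∑ k ∈ Finset.range (m + 1),
        (-1 : ℚ) ^ k * ((2 * m : ℚ) / ((2 * m - k : ℕ) : ℚ)) *
          (Nat.choose (2 * m - k) k : ℚ) * ((m - k).factorial : ℚ) := by
  rw [MenageAux.IE' m]
  refine Finset.sum_congr rfl fun k hk => ?_
  rw [Finset.mem_range] at hk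
  rw [MenageAux.ppCount_eq_Acirc m hm k, MenageAux.Acirc_formula m k hm (by omega)]
  ring
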